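/- Let x ∈ ℝ^c with 𝟙ᵀx = 0. Then for every t ∈ ℝ, | (x,0)ᵀ · U_N(t) · (x,0) | = | xᵀ · U_M(t) · x |. Consequently, for any constant 0 < C ≤ 1, x is C-sedentary in M if and only if (x,0) is C-sedentary in N. -/

import Mathlib

open Matrix

/-- The transition matrix `U_R(t) = exp(i·t·R)` of a real square matrix `R`,
as a complex matrix. -/
noncomputable def U {ι : Type*} [Fintype ι] [DecidableEq ι]
    (R : Matrix ι ι ℝ) (t : ℝ) : Matrix ι ι ℂ :=
  NormedSpace.exp ((Complex.I * (t : ℂ)) • R.map (Complex.ofReal ·))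

open NormedSpace in
/-- If powers of `S` intertwine with powers of `T` through a linear map `E`
applied to a fixed vector, then so do the exponentials. -/
lemma exp_mulVec_intertwine {I J : Type*} [Fintype I] [DecidableEq I]
    [Fintype J] [DecidableEq J]
    (S : Matrix J J ℂ) (T : Matrix I I ℂ) (E : (I → ℂ) →ₗ[ℂ] (J → ℂ)) (x : I → ℂ)
    (h : ∀ n : ℕ, S ^ n *ᵥ E x = E (T ^ n *ᵥ x)) :
    exp S *ᵥ E x = E (exp T *ᵥ x) := by
  letI : SeminormedRing (Matrix J J ℂ) := Matrix.linftyOpSemiNormedRing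
  letI : NormedRing (Matrix J J ℂ) := Matrix.linftyOpNormedRing
  letI : NormedAlgebra ℂ (Matrix J J ℂ) := Matrix.linftyOpNormedAlgebra
  letI : SeminormedRing (Matrix I I ℂ) := Matrix.linftyOpSemiNormedRing
  letI : NormedRing (Matrix I I ℂ) := Matrix.linftyOpNormedRing
  letI : NormedAlgebra ℂ (Matrix I I ℂ) := Matrix.linftyOpNormedAlgebra
  have hS : Summable fun n : ℕ => (n.factorial : ℂ)⁻¹ • S ^ n := expSeries_summable' (𝕂 := ℂ) S
  have hT : Summable fun n : ℕ => (n.factorial : ℂ)⁻¹ • T ^ n := expSeries_summable' (𝕂 := ℂ) T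
  let LSlin : Matrix J J ℂ →ₗ[ℂ] (J → ℂ) :=
    { toFun := fun A => A *ᵥ E x
      map_add' := fun A B => Matrix.add_mulVec A B (E x)
      map_smul' := fun r A => Matrix.smul_mulVec r A (E x) }
  let LTlin : Matrix I I ℂ →ₗ[ℂ] (I → ℂ) :=
    { toFun := fun A => A *ᵥ x
      map_add' := fun A B => Matrix.add_mulVec A B x
      map_smul' := fun r A => Matrix.smul_mulVec r A x }
  let LS : Matrix J J ℂ →L[ℂ] (J → ℂ) := ⟨LSlin, LSlin.continuous_of_finiteDimensional⟩
  let LT : Matrix I I ℂ →L[ℂ] (I → ℂ) := ⟨LTlin, LTlin.continuous_of_finiteDimensional⟩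
  let EC : (I → ℂ) →L[ℂ] (J → ℂ) := ⟨E, E.continuous_of_finiteDimensional⟩
  have key : LS (exp S) = EC (LT (exp T)) := by
    rw [exp_eq_tsum ℂ, exp_eq_tsum ℂ]
    have h2 : Summable fun n : ℕ => LT ((n.factorial : ℂ)⁻¹ • T ^ n) :=
      hT.map (LT : Matrix I I ℂ →+ (I → ℂ)) LT.continuous
    rw [LS.map_tsum hS, LT.map_tsum hT, EC.map_tsum h2]
    refine tsum_congr fun n => ?_
    show LSlin _ = E (LTlin _)
    simp only [LSlin, LTlin, LinearMap.coe_mk, AddHom.coe_mk,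
      Matrix.smul_mulVec, h n, _root_.map_smul]
  exact key

theorem stmt4 (c m : ℕ) (hc : 1 ≤ c)
    (M : Matrix (Fin c) (Fin c) ℝ) (hM : M.IsSymm)
    (μ α : ℝ) (hμ : M *ᵥ (fun _ => (1 : ℝ)) = μ • fun _ => (1 : ℝ))
    (w : Fin m → ℝ)
    (B : Matrix (Fin c) (Fin m) ℝ) (hB : ∀ i j, B i j = w j)
    (D : Matrix (Fin m) (Fin m) ℝ) (hD : D.IsSymm)
    (N : Matrix (Fin c ⊕ Fin m) (Fin c ⊕ Fin m) ℝ)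
    (hN : N = Matrix.fromBlocks (α • (1 : Matrix (Fin c) (Fin c) ℝ) + M) B Bᵀ D)
    (x : Fin c → ℝ) (hx : ∑ i, x i = 0) :
    (∀ t : ℝ,
      ‖(Sum.elim (fun i => (x i : ℂ)) 0 ⬝ᵥ
            (U N t *ᵥ Sum.elim (fun i => (x i : ℂ)) 0))‖ =
        ‖((fun i => (x i : ℂ)) ⬝ᵥ (U M t *ᵥ fun i => (x i : ℂ)))‖) ∧
      ∀ C : ℝ, 0 < C → C ≤ 1 →
        ((∀ t : ℝ, 0 < t →
            C ≤ ‖((fun i => (x i : ℂ)) ⬝ᵥ (U M t *ᵥ fun i => (x i : ℂ)))‖) ↔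
          (∀ t : ℝ, 0 < t →
            C ≤ ‖(Sum.elim (fun i => (x i : ℂ)) 0 ⬝ᵥ
                (U N t *ᵥ Sum.elim (fun i => (x i : ℂ)) 0))‖)) := by
  classical
  set xc : Fin c → ℂ := fun i => (x i : ℂ) with hxc
  have hxsum : ∑ i, xc i = 0 := by
    rw [hxc]
    push_cast
    exact_mod_cast congrArg (fun r : ℝ => (r : ℂ)) hx
  set Mc : Matrix (Fin c) (Fin c) ℂ := M.map (Complex.ofReal ·) with hMc
  set K : Matrix (Fin c) (Fin c) ℂ := (α : ℂ) • 1 + Mc with hK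
  -- the embedding (y ↦ (y,0)) as a linear map
  let E : (Fin c → ℂ) →ₗ[ℂ] (Fin c ⊕ Fin m → ℂ) :=
    { toFun := fun y => Sum.elim y 0
      map_add' := by intro a b; funext j; cases j <;> simp
      map_smul' := by intro r a; funext j; cases j <;> simp }
  have hE : ∀ y : Fin c → ℂ, E y = Sum.elim y 0 := fun _ => rfl
  -- column sums of K are α + μ
  have hcolM : ∀ j, ∑ i, Mc i j = (μ : ℂ) := by
    intro j
    have h1 : ∑ i, M j i = μ := by
      have := congrFun hμ j
      simpa [Matrix.mulVec, dotProduct] using this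
    have h2 : ∑ i, M i j = μ := by
      rw [← h1]; exact Finset.sum_congr rfl fun i _ => hM.apply j i
    calc ∑ i, Mc i j = ((∑ i, M i j : ℝ) : ℂ) := by
          rw [hMc]; push_cast [Matrix.map_apply]; rfl
      _ = (μ : ℂ) := by rw [h2]
  have hcolK : ∀ j, ∑ i, K i j = (α : ℂ) + μ := by
    intro j
    simp only [hK, Matrix.add_apply, Matrix.smul_apply, Finset.sum_add_distrib, hcolM,
      smul_eq_mul]
    congr 1
    simp [Matrix.one_apply]
  -- K preserves sum-zero
  have hKsum : ∀ y : Fin c → ℂ, ∑ i, y i = 0 → ∑ i, (K *ᵥ y) i = 0 := by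
    intro y hy
    have h3 : ∑ i, (K *ᵥ y) i = ∑ j, (∑ i, K i j) * y j := by
      simp only [Matrix.mulVec, dotProduct]
      rw [Finset.sum_comm]
      exact Finset.sum_congr rfl fun j _ => (Finset.sum_mul _ _ _).symm
    rw [h3]
    simp only [hcolK]
    rw [← Finset.mul_sum, hy, mul_zero]
  -- the one-step intertwining
  have hNc : N.map (Complex.ofReal ·) =
      Matrix.fromBlocks K (B.map (Complex.ofReal ·)) ((B.map (Complex.ofReal ·))ᵀ)
        (D.map (Complex.ofReal ·)) := by
    have hA : ((α • (1 : Matrix (Fin c) (Fin c) ℝ) + M).map (Complex.ofReal ·)) = K := by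
      ext i j
      simp [hK, hMc, Matrix.map_apply, Matrix.one_apply, apply_ite]
    rw [hN, Matrix.fromBlocks_map, Matrix.transpose_map, hA]
  have hstep : ∀ y : Fin c → ℂ, ∑ i, y i = 0 →
      (N.map (Complex.ofReal ·)) *ᵥ E y = E (K *ᵥ y) := by
    intro y hy
    rw [hNc, hE, hE, Matrix.fromBlocks_mulVec]
    simp only [Sum.elim_comp_inl, Sum.elim_comp_inr, Matrix.mulVec_zero, add_zero]
    funext j
    cases j with
    | inl i => rfl
    | inr j =>
    show ∑ i, (B.map (Complex.ofReal ·))ᵀ j i * y i = 0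
    have hrow : ∀ i, (B.map (Complex.ofReal ·))ᵀ j i = (w j : ℂ) := by
      intro i; simp [Matrix.map_apply, hB]
    simp only [hrow]
    rw [← Finset.mul_sum, hy, mul_zero]
  -- main computation for each t
  have main : ∀ t : ℝ,
      Sum.elim xc 0 ⬝ᵥ (U N t *ᵥ Sum.elim xc 0) =
        Complex.exp (Complex.I * (t : ℂ) * (α : ℂ)) * (xc ⬝ᵥ (U M t *ᵥ xc)) := by
    intro t
    set z : ℂ := Complex.I * (t : ℂ) with hz
    set S : Matrix (Fin c ⊕ Fin m) (Fin c ⊕ Fin m) ℂ := z • N.map (Complex.ofReal ·) with hS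
    set T : Matrix (Fin c) (Fin c) ℂ := z • K with hT
    have hTmul : ∀ u, T *ᵥ u = z • (K *ᵥ u) := fun u => by
      rw [hT]; exact Matrix.smul_mulVec z K u
    have hSmul : ∀ u, S *ᵥ u = z • (N.map (Complex.ofReal ·) *ᵥ u) := fun u => by
      rw [hS]; exact Matrix.smul_mulVec z _ u
    -- power intertwining
    have hpow : ∀ n : ℕ, (∑ i, (T ^ n *ᵥ xc) i = 0) ∧ S ^ n *ᵥ E xc = E (T ^ n *ᵥ xc) := by
      intro n
      induction n with
      | zero => simp [Matrix.one_mulVec, hxsum]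
      | succ n ih =>
        constructor
        · have h1 : T ^ (n + 1) *ᵥ xc = z • (K *ᵥ (T ^ n *ᵥ xc)) := by
            rw [pow_succ', ← Matrix.mulVec_mulVec, hTmul]
          rw [h1]
          simp only [Pi.smul_apply, smul_eq_mul]
          rw [← Finset.mul_sum, hKsum _ ih.1, mul_zero]
        · calc S ^ (n + 1) *ᵥ E xc
              = S *ᵥ (S ^ n *ᵥ E xc) := by rw [pow_succ', ← Matrix.mulVec_mulVec]
            _ = S *ᵥ E (T ^ n *ᵥ xc) := by rw [ih.2]
            _ = z • (N.map (Complex.ofReal ·) *ᵥ E (T ^ n *ᵥ xc)) := hSmul _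
            _ = z • E (K *ᵥ (T ^ n *ᵥ xc)) := by rw [hstep _ ih.1]
            _ = E (z • (K *ᵥ (T ^ n *ᵥ xc))) := (_root_.map_smul E z _).symm
            _ = E (T *ᵥ (T ^ n *ᵥ xc)) := by rw [hTmul]
            _ = E (T ^ (n + 1) *ᵥ xc) := by rw [Matrix.mulVec_mulVec, ← pow_succ']
    have hU : U N t *ᵥ Sum.elim xc 0 = Sum.elim (NormedSpace.exp T *ᵥ xc) 0 := by
      have h2 := exp_mulVec_intertwine S T E xc (fun n => (hpow n).2)
      rw [hE, hE] at h2
      rw [← h2, hS]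
      rfl
    have hexpT : NormedSpace.exp T = Complex.exp (z * (α : ℂ)) • U M t := by
      letI : SeminormedRing (Matrix (Fin c) (Fin c) ℂ) := Matrix.linftyOpSemiNormedRing
      letI : NormedRing (Matrix (Fin c) (Fin c) ℂ) := Matrix.linftyOpNormedRing
      letI : NormedAlgebra ℂ (Matrix (Fin c) (Fin c) ℂ) := Matrix.linftyOpNormedAlgebra
      have h1 : T = (z * (α : ℂ)) • (1 : Matrix (Fin c) (Fin c) ℂ) + z • Mc := by
        rw [hT, hK, smul_add, smul_smul]
      have h2 : NormedSpace.exp ((z * (α : ℂ)) • (1 : Matrix (Fin c) (Fin c) ℂ)) =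
          Complex.exp (z * (α : ℂ)) • (1 : Matrix (Fin c) (Fin c) ℂ) := by
        rw [← Algebra.algebraMap_eq_smul_one]
        erw [← NormedSpace.algebraMap_exp_comm]
        rw [← Complex.exp_eq_exp_ℂ, Algebra.algebraMap_eq_smul_one]
      rw [h1, Matrix.exp_add_of_commute _ _ ((Commute.one_left (z • Mc)).smul_left _),
        h2, smul_mul_assoc, one_mul]
      show _ = Complex.exp (z * (α : ℂ)) •
        NormedSpace.exp ((Complex.I * (t : ℂ)) • M.map (Complex.ofReal ·))
      rw [← hz, ← hMc]
    calc Sum.elim xc 0 ⬝ᵥ (U N t *ᵥ Sum.elim xc 0)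
        = Sum.elim xc 0 ⬝ᵥ Sum.elim (NormedSpace.exp T *ᵥ xc) 0 := by rw [hU]
      _ = xc ⬝ᵥ (NormedSpace.exp T *ᵥ xc) := by
          rw [sumElim_dotProduct_sumElim]; simp
      _ = Complex.exp (z * (α : ℂ)) * (xc ⬝ᵥ (U M t *ᵥ xc)) := by
          rw [hexpT, Matrix.smul_mulVec, dotProduct_smul, smul_eq_mul]
  have habs : ∀ t : ℝ,
      ‖Sum.elim xc 0 ⬝ᵥ (U N t *ᵥ Sum.elim xc 0)‖ =
        ‖xc ⬝ᵥ (U M t *ᵥ xc)‖ := by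
    intro t
    rw [main t, norm_mul, Complex.norm_exp]
    have : (Complex.I * (t : ℂ) * (α : ℂ)).re = 0 := by
      simp [Complex.mul_re]
    rw [this, Real.exp_zero, one_mul]
  refine ⟨habs, fun C _ _ => ⟨fun h t ht => ?_, fun h t ht => ?_⟩⟩
  · rw [habs t]; exact h t ht
  · rw [← habs t]; exact h t ht
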